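/- Let M be a maximal matching and M* a maximum matching in a graph G with |M| = |M*|/2. Then every connected component of the symmetric difference M Δ M* is a path of length 3 whose middle edge belongs to M and whose two outer edges belong to M*. -/

import Mathlib

def IsMatching {V : Type*} (G : SimpleGraph V) (M : Finset (Sym2 V)) : Prop :=
  (∀ e ∈ M, e ∈ G.edgeSet) ∧
    ∀ e ∈ M, ∀ f ∈ M, e ≠ f → ∀ v : V, ¬(v ∈ e ∧ v ∈ f)

def IsMaximalMatching {V : Type*} [DecidableEq V] (G : SimpleGraph V)
    (M : Finset (Sym2 V)) : Prop :=
  IsMatching G M ∧ ∀ e ∈ G.edgeSet, e ∉ M → ¬IsMatching G (insert e M)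

def IsMaximumMatching {V : Type*} (G : SimpleGraph V) (M : Finset (Sym2 V)) : Prop :=
  IsMatching G M ∧ ∀ M' : Finset (Sym2 V), IsMatching G M' → M'.card ≤ M.card

private lemma sym2_mem_out_iff {α : Type*} (e : Sym2 α) (v : α) :
    v ∈ e ↔ v = e.out.1 ∨ v = e.out.2 := by
  constructor
  · intro h
    have h2 : e = s(e.out.1, e.out.2) := by
      rw [Sym2.mk]; exact (Quot.out_eq e).symm
    rw [h2, Sym2.mem_iff] at h
    exact h
  · rintro (rfl | rfl)
    exacts [e.out_fst_mem, e.out_snd_mem]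

/-- If `M` is a maximal matching and `Mstar` a maximum matching with
    `|M| = |Mstar|/2`, then `M` and `Mstar` are disjoint (so `M Δ Mstar = M ∪ Mstar`)
    and every connected component of `M Δ Mstar` is a path of length 3 whose middle
    edge is in `M` and whose two outer edges belong to `Mstar`; moreover every edge of
    `Mstar` lies on such a path. -/
theorem symmDiff_components_are_P4 {V : Type*} [Fintype V] [DecidableEq V]
    (G : SimpleGraph V) (M Mstar : Finset (Sym2 V))
    (hM : IsMaximalMatching G M) (hMstar : IsMaximumMatching G Mstar)
    (hsize : 2 * M.card = Mstar.card) :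
    (∀ e ∈ M, e ∉ Mstar) ∧
    (∀ e ∈ M, ∃ a b c d : V, List.Nodup [a, b, c, d] ∧
        e = s(b, c) ∧ s(a, b) ∈ Mstar ∧ s(c, d) ∈ Mstar ∧
        ∀ f ∈ M ∪ Mstar, f ≠ e → f ≠ s(a, b) → f ≠ s(c, d) →
          ∀ v : V, v ∈ f → v ∉ ([a, b, c, d] : List V)) ∧
    (∀ f ∈ Mstar, ∃ e ∈ M, ∃ v : V, v ∈ e ∧ v ∈ f) := by
  classical
  obtain ⟨⟨hMedge, hMdisj⟩, hMmax⟩ := hM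
  obtain ⟨⟨hSedge, hSdisj⟩, -⟩ := hMstar
  have rep : ∀ e : Sym2 V, ∃ x y, e = s(x, y) := by
    intro e
    obtain ⟨⟨x, y⟩, h⟩ := Quot.exists_rep e
    exact ⟨x, y, h.symm⟩
  have hne : ∀ e ∈ G.edgeSet, ∀ x y : V, e = s(x, y) → x ≠ y := by
    intro e he x y hexy
    have := G.not_isDiag_of_mem_edgeSet he
    rw [hexy] at this
    simpa using this
  -- every edge of Mstar shares a vertex with some edge of M
  have stepA : ∀ f ∈ Mstar, ∃ e ∈ M, ∃ v : V, v ∈ e ∧ v ∈ f := by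
    intro f hf
    by_cases hfM : f ∈ M
    · obtain ⟨x, y, rfl⟩ := rep f
      exact ⟨_, hfM, x, Sym2.mem_mk_left x y, Sym2.mem_mk_left x y⟩
    · have h := hMmax f (hSedge f hf) hfM
      rw [IsMatching, not_and_or] at h
      rcases h with h | h
      · exfalso
        apply h
        intro e he
        rcases Finset.mem_insert.mp he with rfl | he
        · exact hSedge e hf
        · exact hMedge e he
      · push_neg at h
        obtain ⟨e, he, g, hg, hnefg, v, hve, hvg⟩ := h
        by_cases heM : e ∈ M
        · by_cases hgM : g ∈ M
          · exact absurd ⟨hve, hvg⟩ (hMdisj e heM g hgM hnefg v)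
          · have hg' : g = f := by
              rcases Finset.mem_insert.mp hg with h' | h'
              · exact h'
              · exact absurd h' hgM
            subst hg'
            exact ⟨e, heM, v, hve, hvg⟩
        · have he' : e = f := by
            rcases Finset.mem_insert.mp he with h' | h'
            · exact h'
            · exact absurd h' heM
          subst he'
          have hgM : g ∈ M := by
            rcases Finset.mem_insert.mp hg with h' | h'
            · exact absurd h'.symm hnefg
            · exact h'
          exact ⟨g, hgM, v, hvg, hve⟩
  -- the set of vertices covered by M
  set MV : Finset V := Finset.univ.filter (fun v => ∃ e ∈ M, v ∈ e) with hMVdef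
  have memMV : ∀ v : V, v ∈ MV ↔ ∃ e ∈ M, v ∈ e := by
    intro v; simp [hMVdef]
  -- |MV| = 2 |M|
  have cardMV : MV.card = 2 * M.card := by
    have hrw : MV = M.biUnion (fun e => ({e.out.1, e.out.2} : Finset V)) := by
      ext v
      rw [memMV]
      simp only [Finset.mem_biUnion, Finset.mem_insert, Finset.mem_singleton,
        ← sym2_mem_out_iff]
    rw [hrw, Finset.card_biUnion]
    · have h2 : ∀ e ∈ M, ({e.out.1, e.out.2} : Finset V).card = 2 := by
        intro e he
        refine Finset.card_pair ?_
        refine hne e (hMedge e he) _ _ ?_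
        rw [Sym2.mk]; exact (Quot.out_eq e).symm
      rw [Finset.sum_congr rfl h2, Finset.sum_const, smul_eq_mul, mul_comm]
    · intro e he f hf hef
      rw [Function.onFun, Finset.disjoint_left]
      intro v hv hv'
      simp only [Finset.mem_insert, Finset.mem_singleton, ← sym2_mem_out_iff] at hv hv'
      exact hMdisj e he f hf hef v ⟨hv, hv'⟩
  -- choose for each edge of Mstar a covered vertex in it
  have stepA' : ∀ f ∈ Mstar, ∃ v : V, v ∈ MV ∧ v ∈ f := by
    intro f hf
    obtain ⟨e, he, v, hve, hvf⟩ := stepA f hf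
    exact ⟨v, (memMV v).mpr ⟨e, he, hve⟩, hvf⟩
  have hcard : MV.card ≤ Mstar.card := by rw [cardMV, hsize]
  -- every covered vertex lies on an edge of Mstar
  have cover : ∀ v ∈ MV, ∃ f, f ∈ Mstar ∧ v ∈ f := by
    have := Finset.surj_on_of_inj_on_of_card_le
      (s := Mstar) (t := MV) (fun f hf => (stepA' f hf).choose)
      (fun f hf => (stepA' f hf).choose_spec.1)
      (fun f₁ f₂ h₁ h₂ heq => by
        by_contra hnefg
        refine hSdisj f₁ h₁ f₂ h₂ hnefg (stepA' f₁ h₁).choose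
          ⟨(stepA' f₁ h₁).choose_spec.2, ?_⟩
        rw [heq]
        exact (stepA' f₂ h₂).choose_spec.2)
      hcard
    intro v hv
    obtain ⟨f, hf, hveq⟩ := this v hv
    exact ⟨f, hf, hveq ▸ (stepA' f hf).choose_spec.2⟩
  -- the edge of Mstar through a covered vertex contains no other covered vertex
  have uniq : ∀ f ∈ Mstar, ∀ u v : V, u ∈ MV → v ∈ MV → u ∈ f → v ∈ f → u = v := by
    have key := Finset.inj_on_of_surj_on_of_card_le
      (s := MV) (t := Mstar) (fun v hv => (cover v hv).choose)
      (fun v hv => (cover v hv).choose_spec.1)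
      (fun f hf => by
        obtain ⟨v, hvMV, hvf⟩ := stepA' f hf
        refine ⟨v, hvMV, ?_⟩
        by_contra hnefg
        exact hSdisj _ (cover v hvMV).choose_spec.1 f hf hnefg v
          ⟨(cover v hvMV).choose_spec.2, hvf⟩)
      hcard
    have pick_eq : ∀ (v : V) (hv : v ∈ MV), ∀ f ∈ Mstar, v ∈ f →
        (cover v hv).choose = f := by
      intro v hv f hf hvf
      by_contra hnefg
      exact hSdisj _ (cover v hv).choose_spec.1 f hf hnefg v
        ⟨(cover v hv).choose_spec.2, hvf⟩
    intro f hf u v hu hv huf hvf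
    exact key hu hv ((pick_eq u hu f hf huf).trans (pick_eq v hv f hf hvf).symm)
  -- first claim: disjointness
  have claim1 : ∀ e ∈ M, e ∉ Mstar := by
    intro e he hes
    obtain ⟨x, y, rfl⟩ := rep e
    have hxy : x ≠ y := hne _ (hMedge _ he) x y rfl
    exact hxy (uniq _ hes x y ((memMV x).mpr ⟨_, he, Sym2.mem_mk_left x y⟩)
      ((memMV y).mpr ⟨_, he, Sym2.mem_mk_right x y⟩)
      (Sym2.mem_mk_left x y) (Sym2.mem_mk_right x y))
  refine ⟨claim1, ?_, stepA⟩
  -- second claim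
  intro e he
  obtain ⟨b, c, rfl⟩ := rep e
  have hbc : b ≠ c := hne _ (hMedge _ he) b c rfl
  have hbMV : b ∈ MV := (memMV b).mpr ⟨_, he, Sym2.mem_mk_left b c⟩
  have hcMV : c ∈ MV := (memMV c).mpr ⟨_, he, Sym2.mem_mk_right b c⟩
  obtain ⟨fb, hfb, hbfb⟩ := cover b hbMV
  obtain ⟨fc, hfc, hcfc⟩ := cover c hcMV
  obtain ⟨a, hfba⟩ : ∃ a, fb = s(a, b) := by
    obtain ⟨p, q, rfl⟩ := rep fb
    rcases Sym2.mem_iff.mp hbfb with rfl | rfl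
    · exact ⟨q, Sym2.eq_swap⟩
    · exact ⟨p, rfl⟩
  obtain ⟨d, hfcd⟩ : ∃ d, fc = s(c, d) := by
    obtain ⟨p, q, rfl⟩ := rep fc
    rcases Sym2.mem_iff.mp hcfc with rfl | rfl
    · exact ⟨q, rfl⟩
    · exact ⟨p, Sym2.eq_swap⟩
  have hafb : a ∈ fb := by rw [hfba]; exact Sym2.mem_mk_left a b
  have hdfc : d ∈ fc := by rw [hfcd]; exact Sym2.mem_mk_right c d
  have hab : a ≠ b := hne fb (hSedge fb hfb) a b hfba
  have hcd : c ≠ d := hne fc (hSedge fc hfc) c d hfcd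
  have haMV : a ∉ MV := fun h => hab (uniq fb hfb a b h hbMV hafb hbfb)
  have hdMV : d ∉ MV := fun h => hcd ((uniq fc hfc d c h hcMV hdfc hcfc).symm)
  have hfbfc : fb ≠ fc := fun h => hbc (uniq fb hfb b c hbMV hcMV hbfb (h ▸ hcfc))
  have had : a ≠ d := by
    intro h
    exact hSdisj fb hfb fc hfc hfbfc a ⟨hafb, h ▸ hdfc⟩
  have hac : a ≠ c := fun h => haMV (h ▸ hcMV)
  have hbd : b ≠ d := fun h => hdMV (h ▸ hbMV)
  refine ⟨a, b, c, d, ?_, rfl, hfba ▸ hfb, hfcd ▸ hfc, ?_⟩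
  · simp only [List.nodup_cons, List.mem_cons, List.not_mem_nil, or_false,
      List.mem_singleton, List.nodup_nil, and_true]
    refine ⟨?_, ?_, ?_⟩
    · push_neg
      exact ⟨hab, hac, had⟩
    · push_neg
      exact ⟨hbc, hbd⟩
    · exact ⟨hcd, not_false⟩
  · intro f hf hfe hfab hfcd' v hvf hvl
    have hfab' : f ≠ fb := fun h => hfab (h.trans hfba)
    have hfcd'' : f ≠ fc := fun h => hfcd' (h.trans hfcd)
    simp only [List.mem_cons, List.not_mem_nil, or_false, List.mem_singleton] at hvl
    rcases Finset.mem_union.mp hf with hfM | hfS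
    · rcases hvl with rfl | rfl | rfl | rfl
      · exact haMV ((memMV v).mpr ⟨f, hfM, hvf⟩)
      · exact hMdisj f hfM _ he hfe v ⟨hvf, Sym2.mem_mk_left _ _⟩
      · exact hMdisj f hfM _ he hfe v ⟨hvf, Sym2.mem_mk_right _ _⟩
      · exact hdMV ((memMV v).mpr ⟨f, hfM, hvf⟩)
    · rcases hvl with rfl | rfl | rfl | rfl
      · exact hSdisj f hfS fb hfb hfab' v ⟨hvf, hafb⟩
      · exact hSdisj f hfS fb hfb hfab' v ⟨hvf, hbfb⟩
      · exact hSdisj f hfS fc hfc hfcd'' v ⟨hvf, hcfc⟩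
      · exact hSdisj f hfS fc hfc hfcd'' v ⟨hvf, hdfc⟩
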